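/- Let μ₀, α₀, λ₀, μ₂, α₂, λ₂, κ₀, ν₀, δ₀ ∈ ℝ and define on M₃ the operators C₀ := 2μ₀·sym₀ + 2α₀·skew + (3λ₀+2μ₀)·ℙ, C₂ := 2μ₂·sym₀ + 2α₂·skew + (3λ₂+2μ₂)·ℙ and E := 2κ₀·sym₀ + 2ν₀·skew + (3δ₀+2κ₀)·ℙ. Then the block operator [[C₀, E], [E, C₂]] on M₃ ⊕ M₃ is strictly positive definite if and only if μ₀ > 0, α₀ > 0, λ₀ + (2/3)μ₀ > 0, μ₀μ₂ − κ₀² > 0, α₀α₂ − ν₀² > 0 and (λ₂ + (2/3)μ₂)(λ₀ + (2/3)μ₀) − (δ₀ + (2/3)κ₀)² > 0. -/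

import Mathlib

noncomputable section

open Matrix

/-- The space of real `3 × 3` matrices. -/
abbrev M3 : Type := Matrix (Fin 3) (Fin 3) ℝ

/-- The Frobenius inner product `⟨σ, τ⟩ = trace (σᵀ * τ)` on `M3`. -/
def finner (σ τ : M3) : ℝ := (σᵀ * τ).trace

/-- The symmetric part map `sym τ = (τ + τᵀ)/2`. -/
def symM : M3 →ₗ[ℝ] M3 :=
  (2 : ℝ)⁻¹ • (LinearMap.id + (Matrix.transposeLinearEquiv (Fin 3) (Fin 3) ℝ ℝ).toLinearMap)

/-- The skew-symmetric part map `skew τ = (τ - τᵀ)/2`. -/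
def skewM : M3 →ₗ[ℝ] M3 :=
  (2 : ℝ)⁻¹ • (LinearMap.id - (Matrix.transposeLinearEquiv (Fin 3) (Fin 3) ℝ ℝ).toLinearMap)

/-- The volumetric (pressure) part `ℙ τ = (trace τ / 3) • I`. -/
def volP : M3 →ₗ[ℝ] M3 :=
  (Matrix.traceLinearMap (Fin 3) ℝ ℝ).smulRight ((3 : ℝ)⁻¹ • (1 : M3))

/-- The trace-free symmetric part `sym₀ = sym - ℙ`. -/
def sym0 : M3 →ₗ[ℝ] M3 := symM - volP

lemma finner_eq_sum (σ τ : M3) : finner σ τ = ∑ i, ∑ j, σ i j * τ i j := by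
  simp [finner, Matrix.trace, Matrix.mul_apply, Matrix.diag]
  exact Finset.sum_comm
lemma symM_apply (τ : M3) (i j : Fin 3) : symM τ i j = (τ i j + τ j i) / 2 := by
  simp [symM, Matrix.transposeLinearEquiv]; ring
lemma skewM_apply (τ : M3) (i j : Fin 3) : skewM τ i j = (τ i j - τ j i) / 2 := by
  simp [skewM, Matrix.transposeLinearEquiv]; ring
lemma volP_apply (τ : M3) (i j : Fin 3) :
    volP τ i j = (τ 0 0 + τ 1 1 + τ 2 2) / 3 * (1 : M3) i j := by
  simp [volP, Matrix.trace, Matrix.diag, Fin.sum_univ_succ]; ring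
lemma sym0_apply (τ : M3) (i j : Fin 3) :
    sym0 τ i j = (τ i j + τ j i) / 2 - (τ 0 0 + τ 1 1 + τ 2 2) / 3 * (1 : M3) i j := by
  simp [sym0, symM_apply, volP_apply]

lemma finner_comm (σ τ : M3) : finner σ τ = finner τ σ := by
  simp [finner_eq_sum, mul_comm]
lemma finner_add_right (σ A B : M3) : finner σ (A + B) = finner σ A + finner σ B := by
  simp [finner, Matrix.mul_add]
lemma finner_smul_right (c : ℝ) (σ A : M3) : finner σ (c • A) = c * finner σ A := by
  simp [finner, Matrix.mul_smul]

lemma finner_sym0 (σ τ : M3) : finner σ (sym0 τ) = finner (sym0 σ) (sym0 τ) := by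
  simp only [finner_eq_sum, sym0_apply, Fin.sum_univ_succ, Fin.sum_univ_zero]
  norm_num [Matrix.one_apply, Fin.ext_iff]
  ring
lemma finner_skewM (σ τ : M3) : finner σ (skewM τ) = finner (skewM σ) (skewM τ) := by
  simp only [finner_eq_sum, skewM_apply, Fin.sum_univ_succ, Fin.sum_univ_zero]
  ring
lemma finner_volP (σ τ : M3) : finner σ (volP τ) = finner (volP σ) (volP τ) := by
  simp only [finner_eq_sum, volP_apply, Fin.sum_univ_succ, Fin.sum_univ_zero]
  norm_num [Matrix.one_apply, Fin.ext_iff]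
  ring

lemma expand (μ₀ α₀ lam₀ μ₂ α₂ lam₂ κ₀ ν₀ δ₀ : ℝ) (σ τ : M3) :
    finner σ
        ((((2 * μ₀) • sym0 + (2 * α₀) • skewM + (3 * lam₀ + 2 * μ₀) • volP) σ) +
          (((2 * κ₀) • sym0 + (2 * ν₀) • skewM + (3 * δ₀ + 2 * κ₀) • volP) τ)) +
      finner τ
        ((((2 * κ₀) • sym0 + (2 * ν₀) • skewM + (3 * δ₀ + 2 * κ₀) • volP) σ) +
          (((2 * μ₂) • sym0 + (2 * α₂) • skewM + (3 * lam₂ + 2 * μ₂) • volP) τ)) =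
    ((2 * μ₀) * finner (sym0 σ) (sym0 σ) + 2 * (2 * κ₀) * finner (sym0 σ) (sym0 τ)
      + (2 * μ₂) * finner (sym0 τ) (sym0 τ))
    + ((2 * α₀) * finner (skewM σ) (skewM σ) + 2 * (2 * ν₀) * finner (skewM σ) (skewM τ)
      + (2 * α₂) * finner (skewM τ) (skewM τ))
    + ((3 * lam₀ + 2 * μ₀) * finner (volP σ) (volP σ)
      + 2 * (3 * δ₀ + 2 * κ₀) * finner (volP σ) (volP τ)
      + (3 * lam₂ + 2 * μ₂) * finner (volP τ) (volP τ)) := by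
  simp only [LinearMap.add_apply, LinearMap.smul_apply, finner_add_right, finner_smul_right]
  rw [finner_sym0 σ σ, finner_sym0 σ τ, finner_sym0 τ σ, finner_sym0 τ τ,
    finner_skewM σ σ, finner_skewM σ τ, finner_skewM τ σ, finner_skewM τ τ,
    finner_volP σ σ, finner_volP σ τ, finner_volP τ σ, finner_volP τ τ,
    finner_comm (sym0 τ) (sym0 σ), finner_comm (skewM τ) (skewM σ),
    finner_comm (volP τ) (volP σ)]
  ring

lemma finner_add_left (A B σ : M3) : finner (A + B) σ = finner A σ + finner B σ := by
  rw [finner_comm, finner_add_right, finner_comm σ A, finner_comm σ B]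
lemma finner_smul_left (c : ℝ) (A σ : M3) : finner (c • A) σ = c * finner A σ := by
  rw [finner_comm, finner_smul_right, finner_comm σ A]
lemma finner_zero_right (σ : M3) : finner σ 0 = 0 := by simp [finner]
lemma finner_zero_left (σ : M3) : finner 0 σ = 0 := by simp [finner]

lemma finner_self_nonneg (x : M3) : 0 ≤ finner x x := by
  rw [finner_eq_sum]
  exact Finset.sum_nonneg fun i _ => Finset.sum_nonneg fun j _ => mul_self_nonneg _

lemma finner_self_pos (x : M3) (h : x ≠ 0) : 0 < finner x x := by
  rcases (finner_self_nonneg x).lt_or_eq with h1 | h1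
  · exact h1
  · exfalso; apply h
    ext i j
    have h2 : ∑ i, ∑ j, x i j * x i j = 0 := by rw [← finner_eq_sum, ← h1]
    have h3 : ∀ i ∈ Finset.univ, (0:ℝ) ≤ ∑ j, x i j * x i j :=
      fun i _ => Finset.sum_nonneg fun j _ => mul_self_nonneg _
    have h4 := (Finset.sum_eq_zero_iff_of_nonneg h3).mp h2 i (Finset.mem_univ i)
    have h5 := (Finset.sum_eq_zero_iff_of_nonneg
      (fun j _ => mul_self_nonneg (x i j))).mp h4 j (Finset.mem_univ j)
    have := mul_self_eq_zero.mp h5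
    simpa using this

lemma sq_key (a b c : ℝ) (x y : M3) :
    a * (a * finner x x + 2 * b * finner x y + c * finner y y)
      = finner (a • x + b • y) (a • x + b • y) + (a * c - b ^ 2) * finner y y := by
  rw [finner_add_right, finner_add_left, finner_add_left, finner_smul_left, finner_smul_left,
    finner_smul_left, finner_smul_left, finner_smul_right, finner_smul_right,
    finner_smul_right, finner_smul_right, finner_comm y x]
  ring

lemma quad_nonneg (a b c : ℝ) (ha : 0 < a) (hd : 0 ≤ a * c - b ^ 2) (x y : M3) :
    0 ≤ a * finner x x + 2 * b * finner x y + c * finner y y := by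
  have key := sq_key a b c x y
  have h1 := finner_self_nonneg (a • x + b • y)
  have h2 := finner_self_nonneg y
  nlinarith [mul_nonneg hd h2]

lemma quad_pos (a b c : ℝ) (ha : 0 < a) (hd : 0 < a * c - b ^ 2) (x y : M3)
    (hxy : x ≠ 0 ∨ y ≠ 0) :
    0 < a * finner x x + 2 * b * finner x y + c * finner y y := by
  have key := sq_key a b c x y
  rcases eq_or_ne y 0 with hy | hy
  · subst hy
    have hx : x ≠ 0 := hxy.resolve_right (by simp)
    have hax : a • x ≠ 0 := smul_ne_zero ha.ne' hx
    have h1 : 0 < finner (a • x + b • (0:M3)) (a • x + b • (0:M3)) := by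
      rw [smul_zero, add_zero]; exact finner_self_pos _ hax
    have h2 : finner (0:M3) (0:M3) = 0 := finner_zero_left 0
    nlinarith
  · have h2 : 0 < finner y y := finner_self_pos y hy
    have h1 := finner_self_nonneg (a • x + b • y)
    nlinarith [mul_pos hd h2]

lemma decomp (τ : M3) : sym0 τ + skewM τ + volP τ = τ := by
  ext i j
  simp only [Matrix.add_apply, sym0_apply, skewM_apply, volP_apply]
  ring


def Emat : M3 := !![1,0,0; 0,-1,0; 0,0,0]
def Wmat : M3 := !![0,1,0; -1,0,0; 0,0,0]

lemma sym0_E : sym0 Emat = Emat := by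
  ext i j; rw [sym0_apply]
  fin_cases i <;> fin_cases j <;> norm_num [Emat, Matrix.one_apply, Fin.ext_iff, Matrix.vecHead, Matrix.vecTail, Function.comp, Matrix.cons_val_two]
lemma skewM_E : skewM Emat = 0 := by
  ext i j; rw [Matrix.zero_apply, skewM_apply]
  fin_cases i <;> fin_cases j <;> norm_num [Emat]
lemma volP_E : volP Emat = 0 := by
  ext i j; rw [Matrix.zero_apply, volP_apply]
  fin_cases i <;> fin_cases j <;> norm_num [Emat, Matrix.one_apply, Fin.ext_iff, Matrix.vecHead, Matrix.vecTail, Function.comp, Matrix.cons_val_two]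
lemma sym0_W : sym0 Wmat = 0 := by
  ext i j; rw [Matrix.zero_apply, sym0_apply]
  fin_cases i <;> fin_cases j <;> norm_num [Wmat, Matrix.one_apply, Fin.ext_iff, Matrix.vecHead, Matrix.vecTail, Function.comp, Matrix.cons_val_two]
lemma skewM_W : skewM Wmat = Wmat := by
  ext i j; rw [skewM_apply]
  fin_cases i <;> fin_cases j <;> norm_num [Wmat]
lemma volP_W : volP Wmat = 0 := by
  ext i j; rw [Matrix.zero_apply, volP_apply]
  fin_cases i <;> fin_cases j <;> norm_num [Wmat, Matrix.one_apply, Fin.ext_iff, Matrix.vecHead, Matrix.vecTail, Function.comp, Matrix.cons_val_two]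
lemma sym0_one : sym0 (1 : M3) = 0 := by
  ext i j; rw [Matrix.zero_apply, sym0_apply]
  fin_cases i <;> fin_cases j <;> norm_num [Matrix.one_apply, Fin.ext_iff, Matrix.vecHead, Matrix.vecTail, Function.comp]
lemma skewM_one : skewM (1 : M3) = 0 := by
  ext i j; rw [Matrix.zero_apply, skewM_apply]
  fin_cases i <;> fin_cases j <;> norm_num [Matrix.one_apply, Fin.ext_iff, Matrix.vecHead, Matrix.vecTail, Function.comp]
lemma volP_one : volP (1 : M3) = 1 := by
  ext i j; rw [volP_apply]
  fin_cases i <;> fin_cases j <;> norm_num [Matrix.one_apply, Fin.ext_iff, Matrix.vecHead, Matrix.vecTail, Function.comp]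
lemma finner_E : finner Emat Emat = 2 := by
  norm_num [finner_eq_sum, Fin.sum_univ_succ, Emat]
lemma finner_W : finner Wmat Wmat = 2 := by
  norm_num [finner_eq_sum, Fin.sum_univ_succ, Wmat]
lemma finner_one : finner (1 : M3) (1 : M3) = 3 := by
  norm_num [finner_eq_sum, Fin.sum_univ_succ, Matrix.one_apply]
lemma E_ne : Emat ≠ 0 := by
  intro h
  have := congrFun (congrFun h 0) 0
  norm_num [Emat] at this
lemma W_ne : Wmat ≠ 0 := by
  intro h
  have := congrFun (congrFun h 0) 1
  norm_num [Wmat] at this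
lemma one_ne : (1 : M3) ≠ 0 := by
  intro h
  have := congrFun (congrFun h 0) 0
  norm_num [Matrix.one_apply] at this

/-- The hemitropic block operator `[[C₀, E], [E, C₂]]` on `M₃ ⊕ M₃`
is strictly positive definite iff `μ₀ > 0`, `α₀ > 0`, `λ₀ + (2/3)μ₀ > 0`,
`μ₀μ₂ - κ₀² > 0`, `α₀α₂ - ν₀² > 0` and
`(λ₂ + (2/3)μ₂)(λ₀ + (2/3)μ₀) - (δ₀ + (2/3)κ₀)² > 0`. -/
theorem hemitropic_block_posDef_iff (μ₀ α₀ lam₀ μ₂ α₂ lam₂ κ₀ ν₀ δ₀ : ℝ) :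
    (∀ p : M3 × M3, p ≠ 0 →
        0 < finner p.1
              ((((2 * μ₀) • sym0 + (2 * α₀) • skewM + (3 * lam₀ + 2 * μ₀) • volP) p.1) +
                (((2 * κ₀) • sym0 + (2 * ν₀) • skewM + (3 * δ₀ + 2 * κ₀) • volP) p.2)) +
            finner p.2
              ((((2 * κ₀) • sym0 + (2 * ν₀) • skewM + (3 * δ₀ + 2 * κ₀) • volP) p.1) +
                (((2 * μ₂) • sym0 + (2 * α₂) • skewM + (3 * lam₂ + 2 * μ₂) • volP) p.2))) ↔
      (0 < μ₀ ∧ 0 < α₀ ∧ 0 < lam₀ + (2 / 3) * μ₀ ∧ 0 < μ₀ * μ₂ - κ₀ ^ 2 ∧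
        0 < α₀ * α₂ - ν₀ ^ 2 ∧
        0 < (lam₂ + (2 / 3) * μ₂) * (lam₀ + (2 / 3) * μ₀) - (δ₀ + (2 / 3) * κ₀) ^ 2) := by
  constructor
  · intro hpd
    have H : ∀ σ τ : M3, σ ≠ 0 ∨ τ ≠ 0 →
        0 < ((2 * μ₀) * finner (sym0 σ) (sym0 σ) + 2 * (2 * κ₀) * finner (sym0 σ) (sym0 τ)
              + (2 * μ₂) * finner (sym0 τ) (sym0 τ))
            + ((2 * α₀) * finner (skewM σ) (skewM σ) + 2 * (2 * ν₀) * finner (skewM σ) (skewM τ)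
              + (2 * α₂) * finner (skewM τ) (skewM τ))
            + ((3 * lam₀ + 2 * μ₀) * finner (volP σ) (volP σ)
              + 2 * (3 * δ₀ + 2 * κ₀) * finner (volP σ) (volP τ)
              + (3 * lam₂ + 2 * μ₂) * finner (volP τ) (volP τ)) := by
      intro σ τ h0
      have hne : (σ, τ) ≠ (0 : M3 × M3) := by
        intro hc
        rw [Prod.mk_eq_zero] at hc
        tauto
      have h : 0 < finner σ
              ((((2 * μ₀) • sym0 + (2 * α₀) • skewM + (3 * lam₀ + 2 * μ₀) • volP) σ) +
                (((2 * κ₀) • sym0 + (2 * ν₀) • skewM + (3 * δ₀ + 2 * κ₀) • volP) τ)) +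
            finner τ
              ((((2 * κ₀) • sym0 + (2 * ν₀) • skewM + (3 * δ₀ + 2 * κ₀) • volP) σ) +
                (((2 * μ₂) • sym0 + (2 * α₂) • skewM + (3 * lam₂ + 2 * μ₂) • volP) τ)) :=
        hpd ⟨σ, τ⟩ hne
      rwa [expand] at h
    have hμ : 0 < μ₀ := by
      have h := H Emat 0 (Or.inl E_ne)
      simp only [sym0_E, skewM_E, volP_E, map_zero, finner_zero_right, finner_zero_left,
        finner_E, mul_zero, add_zero, zero_add] at h
      linarith
    have hα : 0 < α₀ := by
      have h := H Wmat 0 (Or.inl W_ne)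
      simp only [sym0_W, skewM_W, volP_W, map_zero, finner_zero_right, finner_zero_left,
        finner_W, mul_zero, add_zero, zero_add] at h
      linarith
    have hlam : 0 < lam₀ + (2 / 3) * μ₀ := by
      have h := H 1 0 (Or.inl one_ne)
      simp only [sym0_one, skewM_one, volP_one, map_zero, finner_zero_right, finner_zero_left,
        finner_one, mul_zero, add_zero, zero_add] at h
      linarith
    have hdμ : 0 < μ₀ * μ₂ - κ₀ ^ 2 := by
      have h := H ((-κ₀) • Emat) (μ₀ • Emat) (Or.inr (smul_ne_zero hμ.ne' E_ne))
      simp only [LinearMap.map_smul, sym0_E, skewM_E, volP_E, smul_zero, finner_zero_right,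
        finner_zero_left, finner_smul_left, finner_smul_right, finner_E, mul_zero,
        add_zero, zero_add] at h
      nlinarith [h, hμ]
    have hdα : 0 < α₀ * α₂ - ν₀ ^ 2 := by
      have h := H ((-ν₀) • Wmat) (α₀ • Wmat) (Or.inr (smul_ne_zero hα.ne' W_ne))
      simp only [LinearMap.map_smul, sym0_W, skewM_W, volP_W, smul_zero, finner_zero_right,
        finner_zero_left, finner_smul_left, finner_smul_right, finner_W, mul_zero,
        add_zero, zero_add] at h
      nlinarith [h, hα]
    have h3a : 0 < 3 * lam₀ + 2 * μ₀ := by linarith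
    have hdlam : 0 < (lam₂ + (2 / 3) * μ₂) * (lam₀ + (2 / 3) * μ₀) - (δ₀ + (2 / 3) * κ₀) ^ 2 := by
      have h := H ((-(3 * δ₀ + 2 * κ₀)) • (1 : M3)) ((3 * lam₀ + 2 * μ₀) • (1 : M3))
        (Or.inr (smul_ne_zero h3a.ne' one_ne))
      simp only [LinearMap.map_smul, sym0_one, skewM_one, volP_one, smul_zero, finner_zero_right,
        finner_zero_left, finner_smul_left, finner_smul_right, finner_one, mul_zero,
        add_zero, zero_add] at h
      have h9 : 0 < (3 * lam₀ + 2 * μ₀) * ((3 * lam₂ + 2 * μ₂) * (3 * lam₀ + 2 * μ₀)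
          - (3 * δ₀ + 2 * κ₀) ^ 2) := by nlinarith [h]
      have h10 : 0 < (3 * lam₂ + 2 * μ₂) * (3 * lam₀ + 2 * μ₀) - (3 * δ₀ + 2 * κ₀) ^ 2 := by
        nlinarith [h9, h3a]
      nlinarith [h10]
    exact ⟨hμ, hα, hlam, hdμ, hdα, hdlam⟩
  · rintro ⟨h1, h2, h3, h4, h5, h6⟩
    intro p hp
    rw [expand μ₀ α₀ lam₀ μ₂ α₂ lam₂ κ₀ ν₀ δ₀ p.1 p.2]
    have hμ' : 0 < 2 * μ₀ := by linarith
    have hα' : 0 < 2 * α₀ := by linarith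
    have h3' : 0 < 3 * lam₀ + 2 * μ₀ := by linarith
    have hsdet : 0 < (2 * μ₀) * (2 * μ₂) - (2 * κ₀) ^ 2 := by nlinarith
    have hwdet : 0 < (2 * α₀) * (2 * α₂) - (2 * ν₀) ^ 2 := by nlinarith
    have hvdet : 0 < (3 * lam₀ + 2 * μ₀) * (3 * lam₂ + 2 * μ₂) - (3 * δ₀ + 2 * κ₀) ^ 2 := by
      nlinarith
    have Hs := quad_nonneg (2 * μ₀) (2 * κ₀) (2 * μ₂) hμ' hsdet.le (sym0 p.1) (sym0 p.2)
    have Hw := quad_nonneg (2 * α₀) (2 * ν₀) (2 * α₂) hα' hwdet.le (skewM p.1) (skewM p.2)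
    have Hv := quad_nonneg (3 * lam₀ + 2 * μ₀) (3 * δ₀ + 2 * κ₀) (3 * lam₂ + 2 * μ₂) h3'
      hvdet.le (volP p.1) (volP p.2)
    have hne : p.1 ≠ 0 ∨ p.2 ≠ 0 := by
      by_contra hc
      push_neg at hc
      exact hp (Prod.ext_iff.mpr ⟨by simpa using hc.1, by simpa using hc.2⟩)
    have hcomp : (sym0 p.1 ≠ 0 ∨ sym0 p.2 ≠ 0) ∨ (skewM p.1 ≠ 0 ∨ skewM p.2 ≠ 0) ∨
        (volP p.1 ≠ 0 ∨ volP p.2 ≠ 0) := by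
      by_contra hc
      push_neg at hc
      obtain ⟨⟨hs1, hs2⟩, ⟨hw1, hw2⟩, hv1, hv2⟩ := hc
      rcases hne with hσ | hτ
      · exact hσ (by rw [← decomp p.1, hs1, hw1, hv1]; simp)
      · exact hτ (by rw [← decomp p.2, hs2, hw2, hv2]; simp)
    rcases hcomp with h | h | h
    · have := quad_pos (2 * μ₀) (2 * κ₀) (2 * μ₂) hμ' hsdet (sym0 p.1) (sym0 p.2) h
      linarith
    · have := quad_pos (2 * α₀) (2 * ν₀) (2 * α₂) hα' hwdet (skewM p.1) (skewM p.2) h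
      linarith
    · have := quad_pos (3 * lam₀ + 2 * μ₀) (3 * δ₀ + 2 * κ₀) (3 * lam₂ + 2 * μ₂) h3' hvdet
        (volP p.1) (volP p.2) h
      linarith
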